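/- Let F : ℝᵈ → ℝ be differentiable with L-Lipschitz gradient and bounded below by F⋆. Suppose the update is θ^{t+1} = θ^t − η·d_t where each d_t ∈ ℝᵈ satisfies ⟨∇F(θ^t), d_t⟩ ≥ μ‖∇F(θ^t)‖² and ‖d_t‖ ≤ M‖∇F(θ^t)‖ for constants μ > 0, M > 0. If η ≤ μ/(LM²), then ∑_{t=0}^{T−1} ‖∇F(θ^t)‖² ≤ 2(F(θ⁰) − F⋆)/(ημ), and in particular min_{t<T} ‖∇F(θ^t)‖² ≤ 2(F(θ⁰) − F⋆)/(ημT). -/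

import Mathlib

open RealInnerProductSpace

lemma descent_lemma {n : ℕ} (F : EuclideanSpace ℝ (Fin n) → ℝ) (L : ℝ)
    (hdiff : Differentiable ℝ F)
    (hLip : ∀ x y : EuclideanSpace ℝ (Fin n), ‖gradient F x - gradient F y‖ ≤ L * ‖x - y‖)
    (x v : EuclideanSpace ℝ (Fin n)) :
    F (x + v) ≤ F x + ⟪gradient F x, v⟫ + L / 2 * ‖v‖ ^ 2 := by
  set c : ℝ := ⟪gradient F x, v⟫ with hc
  set h : ℝ → ℝ := fun t => F (x + t • v) - t * c - L / 2 * ‖v‖ ^ 2 * t ^ 2 with hh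
  have hderiv : ∀ t : ℝ,
      HasDerivAt h (⟪gradient F (x + t • v), v⟫ - c - L * ‖v‖ ^ 2 * t) t := by
    intro t
    have hcurve : HasDerivAt (fun t : ℝ => x + t • v) v t := by
      simpa using ((hasDerivAt_id t).smul_const v).const_add x
    have hg := (hdiff (x + t • v)).hasGradientAt
    have hF : HasDerivAt (fun t : ℝ => F (x + t • v)) ⟪gradient F (x + t • v), v⟫ t := by
      have := hg.hasFDerivAt.comp_hasDerivAt t hcurve
      exact this
    have h1 : HasDerivAt (fun t : ℝ => t * c) c t := by
      simpa using (hasDerivAt_id t).mul_const c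
    have h2 : HasDerivAt (fun t : ℝ => L / 2 * ‖v‖ ^ 2 * t ^ 2)
        (L * ‖v‖ ^ 2 * t) t := by
      have := (hasDerivAt_pow 2 t).const_mul (L / 2 * ‖v‖ ^ 2)
      convert this using 1
      · rfl
      · rfl
      ring
    exact (hF.sub h1).sub h2
  have hanti : AntitoneOn h (Set.Icc (0 : ℝ) 1) := by
    apply antitoneOn_of_deriv_nonpos (convex_Icc 0 1)
    · exact fun t _ => ((hderiv t).continuousAt).continuousWithinAt
    · exact fun t _ => ((hderiv t).differentiableAt).differentiableWithinAt
    · intro t ht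
      rw [interior_Icc] at ht
      rw [(hderiv t).deriv]
      have hineq : ⟪gradient F (x + t • v) - gradient F x, v⟫
          ≤ L * ‖v‖ ^ 2 * t := by
        calc ⟪gradient F (x + t • v) - gradient F x, v⟫
            ≤ ‖gradient F (x + t • v) - gradient F x‖ * ‖v‖ := real_inner_le_norm _ _
          _ ≤ (L * ‖(x + t • v) - x‖) * ‖v‖ := by
              apply mul_le_mul_of_nonneg_right (hLip _ _) (norm_nonneg _)
          _ = L * ‖v‖ ^ 2 * t := by
              have : ‖(x + t • v) - x‖ = t * ‖v‖ := by
                simp [norm_smul, abs_of_pos ht.1]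
              rw [this]; ring
      have : ⟪gradient F (x + t • v), v⟫ - c = ⟪gradient F (x + t • v) - gradient F x, v⟫ := by
        rw [inner_sub_left, hc]
      linarith
  have h01 := hanti (Set.left_mem_Icc.mpr zero_le_one) (Set.right_mem_Icc.mpr zero_le_one)
    zero_le_one
  simp only [hh, one_smul, zero_smul, add_zero, one_mul, one_pow, zero_mul, mul_zero,
    sub_zero] at h01
  simp only [ne_eq, OfNat.ofNat_ne_zero, not_false_eq_true, zero_pow, mul_zero, sub_zero] at h01
  linarith

/-- abstract convergence guarantee: gradient steps along directions
sufficiently aligned with the true gradient drive the squared gradient norms summable. -/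
theorem aligned_descent_convergence {n : ℕ} (F : EuclideanSpace ℝ (Fin n) → ℝ)
    (L Fstar μ M η : ℝ) (hdiff : Differentiable ℝ F)
    (hLip : ∀ x y : EuclideanSpace ℝ (Fin n), ‖gradient F x - gradient F y‖ ≤ L * ‖x - y‖)
    (hbelow : ∀ x, Fstar ≤ F x)
    (θ d : ℕ → EuclideanSpace ℝ (Fin n))
    (hupdate : ∀ t, θ (t + 1) = θ t - η • d t)
    (hμ : 0 < μ) (hM : 0 < M) (hηpos : 0 < η) (hη : η ≤ μ / (L * M ^ 2))
    (halign : ∀ t, μ * ‖gradient F (θ t)‖ ^ 2 ≤ ⟪gradient F (θ t), d t⟫)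
    (hbound : ∀ t, ‖d t‖ ≤ M * ‖gradient F (θ t)‖) (T : ℕ) :
    (∑ t ∈ Finset.range T, ‖gradient F (θ t)‖ ^ 2 ≤ 2 * (F (θ 0) - Fstar) / (η * μ)) ∧
      (0 < T → ∃ t < T, ‖gradient F (θ t)‖ ^ 2 ≤ 2 * (F (θ 0) - Fstar) / (η * μ * T)) := by
  have hL : 0 < L := by
    by_contra hL
    push_neg at hL
    have hLM : L * M ^ 2 ≤ 0 := mul_nonpos_of_nonpos_of_nonneg hL (by positivity)
    have : μ / (L * M ^ 2) ≤ 0 := div_nonpos_of_nonneg_of_nonpos hμ.le hLM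
    linarith
  have hηLM : η * (L * M ^ 2) ≤ μ := by
    rw [← le_div_iff₀ (by positivity)]; exact hη
  -- per-step decrease
  have key : ∀ t, F (θ (t + 1)) + η * μ / 2 * ‖gradient F (θ t)‖ ^ 2 ≤ F (θ t) := by
    intro t
    have hstep : θ (t + 1) = θ t + (-(η • d t)) := by
      rw [hupdate t]; abel
    have hd := descent_lemma F L hdiff hLip (θ t) (-(η • d t))
    rw [← hstep] at hd
    have hinner : ⟪gradient F (θ t), -(η • d t)⟫ = -(η * ⟪gradient F (θ t), d t⟫) := by
      rw [inner_neg_right, real_inner_smul_right]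
    have hnorm : ‖-(η • d t)‖ ^ 2 = η ^ 2 * ‖d t‖ ^ 2 := by
      rw [norm_neg, norm_smul]
      rw [Real.norm_eq_abs, abs_of_pos hηpos]
      ring
    rw [hinner, hnorm] at hd
    have hdsq : ‖d t‖ ^ 2 ≤ M ^ 2 * ‖gradient F (θ t)‖ ^ 2 := by
      have := hbound t
      nlinarith [norm_nonneg (d t), norm_nonneg (gradient F (θ t))]
    have ha := halign t
    set G := ‖gradient F (θ t)‖ ^ 2 with hG
    have hGnn : (0:ℝ) ≤ G := sq_nonneg _
    have h3 : L / 2 * (η ^ 2 * ‖d t‖ ^ 2) ≤ η * μ / 2 * G := by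
      have s1 : L / 2 * (η ^ 2 * ‖d t‖ ^ 2) ≤ L / 2 * (η ^ 2 * (M ^ 2 * G)) := by
        apply mul_le_mul_of_nonneg_left _ (by positivity)
        exact mul_le_mul_of_nonneg_left hdsq (sq_nonneg η)
      have s2 : L / 2 * (η ^ 2 * (M ^ 2 * G)) = η * (L * M ^ 2) * (η / 2 * G) := by ring
      have s3 : η * (L * M ^ 2) * (η / 2 * G) ≤ μ * (η / 2 * G) :=
        mul_le_mul_of_nonneg_right hηLM (by positivity)
      calc L / 2 * (η ^ 2 * ‖d t‖ ^ 2) ≤ η * (L * M ^ 2) * (η / 2 * G) := by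
            rw [← s2]; exact s1
        _ ≤ μ * (η / 2 * G) := s3
        _ = η * μ / 2 * G := by ring
    have h4 : η * (μ * G) ≤ η * ⟪gradient F (θ t), d t⟫ :=
      mul_le_mul_of_nonneg_left ha hηpos.le
    linarith
  -- telescoping
  have tele : ∀ T : ℕ, F (θ T) + η * μ / 2 * ∑ t ∈ Finset.range T, ‖gradient F (θ t)‖ ^ 2
      ≤ F (θ 0) := by
    intro T
    induction T with
    | zero => simp
    | succ T ih =>
      rw [Finset.sum_range_succ]
      have := key T
      nlinarith
  have hsum : ∑ t ∈ Finset.range T, ‖gradient F (θ t)‖ ^ 2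
      ≤ 2 * (F (θ 0) - Fstar) / (η * μ) := by
    have h1 := tele T
    have h2 := hbelow (θ T)
    rw [le_div_iff₀ (by positivity : (0:ℝ) < η * μ)]
    nlinarith
  refine ⟨hsum, fun hT => ?_⟩
  have hne : (Finset.range T).Nonempty := Finset.nonempty_range_iff.mpr hT.ne'
  have := Finset.exists_le_of_sum_le hne (f := fun t => ‖gradient F (θ t)‖ ^ 2)
    (g := fun _ => 2 * (F (θ 0) - Fstar) / (η * μ * T)) ?_
  · obtain ⟨t, ht, hle⟩ := this
    exact ⟨t, Finset.mem_range.mp ht, hle⟩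
  · rw [Finset.sum_const, Finset.card_range, nsmul_eq_mul]
    have hTpos : (0:ℝ) < T := Nat.cast_pos.mpr hT
    have : (T:ℝ) * (2 * (F (θ 0) - Fstar) / (η * μ * T)) = 2 * (F (θ 0) - Fstar) / (η * μ) := by
      field_simp
    rw [this]; exact hsum
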